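/- Let (X, μ) be a probability space with a Markov kernel x ↦ ν_x for which μ is stationary. Let 0 < T₀ < T₁ with T₀ > T₁/2, and ε > 0. Suppose α : X → [0, ∞) is an (ε; T₀, T₁)-additive Margulis function, and β : X → [0, ∞) is measurable, satisfies condition (M-a) with constant T₁ (for μ-a.e. x and ν_x-a.e. y, |β(y) − β(x)| ≤ T₁), and satisfies μ({x ∈ X : α(x) + T₁ ≤ β(x) < T₀ + ∫_X β(y) dν_x(y)}) < ε. Then γ := max(0, α − 2T₁, β − 5T₁) is a (2ε; 2T₀ − T₁, T₁)-additive Margulis function: γ satisfies (M-a) with constant T₁, and μ({x ∈ X : T₁ ≤ γ(x) < (2T₀ − T₁) + ∫_X γ(y) dν_x(y)}) < 2ε. -/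

import Mathlib

open MeasureTheory ProbabilityTheory

private lemma max3_lip {a b a' b' T : ℝ} (hT : 0 ≤ T) (ha : |a' - a| ≤ T) (hb : |b' - b| ≤ T) :
    |max 0 (max a' b') - max 0 (max a b)| ≤ T := by
  have h1 : |max a' b' - max a b| ≤ max |a' - a| |b' - b| :=
    abs_max_sub_max_le_max a' b' a b
  calc |max 0 (max a' b') - max 0 (max a b)|
      ≤ max |(0:ℝ) - 0| |max a' b' - max a b| := abs_max_sub_max_le_max 0 _ 0 _
    _ ≤ T := by
        apply max_le
        · simpa using hT
        · exact h1.trans (max_le ha hb)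

private lemma margulis_core
    {X : Type*} [MeasurableSpace X] (ν : Measure X) [IsProbabilityMeasure ν]
    (T₀ T₁ A Bv : ℝ) (hT₀ : 0 < T₀) (hT₀T₁ : T₀ < T₁)
    (α β : X → ℝ) (hαm : Measurable α) (hβm : Measurable β)
    (hA : ∀ᵐ y ∂ν, |α y - A| ≤ T₁) (hB : ∀ᵐ y ∂ν, |β y - Bv| ≤ T₁)
    (hSα : ¬ (T₁ ≤ A ∧ A < T₀ + ∫ y, α y ∂ν))
    (hSβ : ¬ (A + T₁ ≤ Bv ∧ Bv < T₀ + ∫ y, β y ∂ν))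
    (hγ1 : T₁ ≤ max 0 (max (A - 2 * T₁) (Bv - 5 * T₁)))
    (hγ2 : max 0 (max (A - 2 * T₁) (Bv - 5 * T₁)) <
      (2 * T₀ - T₁) + ∫ y, max 0 (max (α y - 2 * T₁) (β y - 5 * T₁)) ∂ν) :
    False := by
  have hT₁pos : 0 < T₁ := hT₀.trans hT₀T₁
  set γ : X → ℝ := fun y => max 0 (max (α y - 2 * T₁) (β y - 5 * T₁)) with hγdef
  have hγm : Measurable γ :=
    measurable_const.max ((hαm.sub measurable_const).max (hβm.sub measurable_const))
  have hintα : Integrable α ν := by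
    apply Integrable.mono' (integrable_const (|A| + T₁)) hαm.aestronglyMeasurable
    filter_upwards [hA] with y h1
    rw [Real.norm_eq_abs]
    have := abs_sub_abs_le_abs_sub (α y) A
    linarith
  have hintβ : Integrable β ν := by
    apply Integrable.mono' (integrable_const (|Bv| + T₁)) hβm.aestronglyMeasurable
    filter_upwards [hB] with y h1
    rw [Real.norm_eq_abs]
    have := abs_sub_abs_le_abs_sub (β y) Bv
    linarith
  have hintγ : Integrable γ ν := by
    apply Integrable.mono' (integrable_const (|A| + |Bv| + 5 * T₁)) hγm.aestronglyMeasurable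
    filter_upwards [hA, hB] with y h1 h2
    rw [Real.norm_eq_abs, abs_of_nonneg (le_max_left _ _)]
    have h1' := abs_le.mp h1
    have h2' := abs_le.mp h2
    have l1 := le_abs_self A
    have l2 := le_abs_self Bv
    have l3 := abs_nonneg A
    have l4 := abs_nonneg Bv
    exact max_le (by linarith) (max_le (by linarith) (by linarith))
  -- helper to bound the integral of γ
  have hIγ_le : ∀ (c : ℝ) (f : X → ℝ), Integrable f ν → (∀ᵐ y ∂ν, γ y ≤ f y + c) →
      (∫ y, γ y ∂ν) ≤ (∫ y, f y ∂ν) + c := by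
    intro c f hf h
    have := integral_mono_ae hintγ (hf.add (integrable_const c)) h
    simp only [Pi.add_apply] at this
    rwa [integral_add hf (integrable_const c), integral_const,
      probReal_univ, one_smul] at this
  by_cases hc1 : Bv < A + T₁
  · -- Case I : β is not much larger than α at x
    have hA3 : T₁ ≤ A - 2 * T₁ := by
      by_contra h
      push_neg at h
      have : max 0 (max (A - 2 * T₁) (Bv - 5 * T₁)) < T₁ :=
        max_lt hT₁pos (max_lt h (by linarith))
      linarith
    have hIα : T₀ + (∫ y, α y ∂ν) ≤ A := by
      rcases not_and_or.mp hSα with h | h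
      · exact absurd (by linarith : T₁ ≤ A) h
      · linarith [not_lt.mp h]
    have hbound : (∫ y, γ y ∂ν) ≤ (∫ y, α y ∂ν) + (-(2 * T₁)) := by
      apply hIγ_le _ _ hintα
      filter_upwards [hA, hB] with y h1 h2
      have h1' := abs_le.mp h1
      have h2' := abs_le.mp h2
      exact max_le (by linarith) (max_le (by linarith) (by linarith))
    have hlow : A - 2 * T₁ ≤ max 0 (max (A - 2 * T₁) (Bv - 5 * T₁)) :=
      (le_max_left _ _).trans (le_max_right _ _)
    linarith
  · -- Case II : β x ≥ α x + T₁
    push_neg at hc1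
    have hIβ : T₀ + (∫ y, β y ∂ν) ≤ Bv := by
      rcases not_and_or.mp hSβ with h | h
      · exact absurd hc1 h
      · linarith [not_lt.mp h]
    by_cases hc2 : A < T₁
    · -- Case II.1 : α x is small
      have hB6 : T₁ ≤ Bv - 5 * T₁ := by
        by_contra h
        push_neg at h
        have : max 0 (max (A - 2 * T₁) (Bv - 5 * T₁)) < T₁ :=
          max_lt hT₁pos (max_lt (by linarith) h)
        linarith
      have hbound : (∫ y, γ y ∂ν) ≤ (∫ y, β y ∂ν) + (-(5 * T₁)) := by
        apply hIγ_le _ _ hintβ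
        filter_upwards [hA, hB] with y h1 h2
        have h1' := abs_le.mp h1
        have h2' := abs_le.mp h2
        exact max_le (by linarith) (max_le (by linarith) (by linarith))
      have hlow : Bv - 5 * T₁ ≤ max 0 (max (A - 2 * T₁) (Bv - 5 * T₁)) :=
        (le_max_right _ _).trans (le_max_right _ _)
      linarith
    · -- Case II.2 : both α and β are non-dropping at x
      push_neg at hc2
      have hIα : T₀ + (∫ y, α y ∂ν) ≤ A := by
        rcases not_and_or.mp hSα with h | h
        · exact absurd hc2 h
        · linarith [not_lt.mp h]
      set M : ℝ := max 0 (max (A - 3 * T₁) (Bv - 6 * T₁)) with hMdef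
      have hM0 : 0 ≤ M := le_max_left _ _
      have hM1 : A - 3 * T₁ ≤ M := (le_max_left _ _).trans (le_max_right _ _)
      have hM2 : Bv - 6 * T₁ ≤ M := (le_max_right _ _).trans (le_max_right _ _)
      have hint_sum : Integrable (fun y => α y + β y) ν := hintα.add hintβ
      have hbound : (∫ y, γ y ∂ν) ≤ (∫ y, (α y + β y) ∂ν) + (M + 2 * T₁ - A - Bv) := by
        apply hIγ_le _ _ hint_sum
        filter_upwards [hA, hB] with y h1 h2
        have h1' := abs_le.mp h1
        have h2' := abs_le.mp h2
        exact max_le (by linarith) (max_le (by linarith) (by linarith))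
      have hsum : (∫ y, (α y + β y) ∂ν) = (∫ y, α y ∂ν) + (∫ y, β y ∂ν) :=
        integral_add hintα hintβ
      -- γ x ≥ M + T₁
      have hlowM : M + T₁ ≤ max 0 (max (A - 2 * T₁) (Bv - 5 * T₁)) := by
        have l1 : A - 2 * T₁ ≤ max 0 (max (A - 2 * T₁) (Bv - 5 * T₁)) :=
          (le_max_left _ _).trans (le_max_right _ _)
        have l2 : Bv - 5 * T₁ ≤ max 0 (max (A - 2 * T₁) (Bv - 5 * T₁)) :=
          (le_max_right _ _).trans (le_max_right _ _)
        have : M ≤ max 0 (max (A - 2 * T₁) (Bv - 5 * T₁)) - T₁ :=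
          max_le (by linarith) (max_le (by linarith) (by linarith))
        linarith
      rw [hsum] at hbound
      linarith

/-- **Claim (combining Margulis functions).**
If `α` is an `(ε; T₀, T₁)`-additive Margulis function with `T₀ > T₁/2`, and `β ≥ 0`
satisfies condition (M-a) with constant `T₁` together with
`μ {x : α x + T₁ ≤ β x < T₀ + ∫ β d(κ x)} < ε`, then
`γ = max(0, α − 2T₁, β − 5T₁)` is a `(2ε; 2T₀ − T₁, T₁)`-additive Margulis function. -/
theorem maxing_to_margulis
    {X : Type*} [MeasurableSpace X]
    (μ : Measure X) [IsProbabilityMeasure μ]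
    (κ : Kernel X X) [IsMarkovKernel κ]
    (hstat : ∀ E : Set X, MeasurableSet E → μ E = ∫⁻ x, κ x E ∂μ)
    (T₀ T₁ ε : ℝ) (hT₀ : 0 < T₀) (hT₀T₁ : T₀ < T₁) (hT₀big : T₁ / 2 < T₀) (hε : 0 < ε)
    (α β : X → ℝ) (hαmeas : Measurable α) (hβmeas : Measurable β)
    (hαnonneg : ∀ x, 0 ≤ α x) (hβnonneg : ∀ x, 0 ≤ β x)
    -- `α` is an `(ε; T₀, T₁)`-additive Margulis function:
    (hαMa : ∀ᵐ x ∂μ, ∀ᵐ y ∂(κ x), |α y - α x| ≤ T₁)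
    (hαMb : μ {x | T₁ ≤ α x ∧ α x < T₀ + ∫ y, α y ∂(κ x)} < ENNReal.ofReal ε)
    -- `β` satisfies (M-a) with constant `T₁` and the modified inequality (M-b):
    (hβMa : ∀ᵐ x ∂μ, ∀ᵐ y ∂(κ x), |β y - β x| ≤ T₁)
    (hβMb : μ {x | α x + T₁ ≤ β x ∧ β x < T₀ + ∫ y, β y ∂(κ x)} < ENNReal.ofReal ε) :
    (∀ᵐ x ∂μ, ∀ᵐ y ∂(κ x),
        |max 0 (max (α y - 2 * T₁) (β y - 5 * T₁)) -
          max 0 (max (α x - 2 * T₁) (β x - 5 * T₁))| ≤ T₁) ∧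
    μ {x | T₁ ≤ max 0 (max (α x - 2 * T₁) (β x - 5 * T₁)) ∧
          max 0 (max (α x - 2 * T₁) (β x - 5 * T₁)) <
            (2 * T₀ - T₁) + ∫ y, max 0 (max (α y - 2 * T₁) (β y - 5 * T₁)) ∂(κ x)}
      < ENNReal.ofReal (2 * ε) := by
  have hT₁pos : 0 < T₁ := hT₀.trans hT₀T₁
  constructor
  · -- condition (M-a) for γ
    filter_upwards [hαMa, hβMa] with x hax hbx
    filter_upwards [hax, hbx] with y hay hby
    exact max3_lip hT₁pos.le (by simpa using hay) (by simpa using hby)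
  · -- condition (M-b) for γ
    set Sα := {x | T₁ ≤ α x ∧ α x < T₀ + ∫ y, α y ∂(κ x)} with hSαdef
    set Sβ := {x | α x + T₁ ≤ β x ∧ β x < T₀ + ∫ y, β y ∂(κ x)} with hSβdef
    set N := {x | ¬ ((∀ᵐ y ∂(κ x), |α y - α x| ≤ T₁) ∧ (∀ᵐ y ∂(κ x), |β y - β x| ≤ T₁))}
      with hNdef
    have hNnull : μ N = 0 := by
      have := hαMa.and hβMa
      rwa [MeasureTheory.ae_iff] at this
    have hsub : {x | T₁ ≤ max 0 (max (α x - 2 * T₁) (β x - 5 * T₁)) ∧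
          max 0 (max (α x - 2 * T₁) (β x - 5 * T₁)) <
            (2 * T₀ - T₁) + ∫ y, max 0 (max (α y - 2 * T₁) (β y - 5 * T₁)) ∂(κ x)}
        ⊆ (Sα ∪ Sβ) ∪ N := by
      intro x hx
      by_cases hg : (∀ᵐ y ∂(κ x), |α y - α x| ≤ T₁) ∧ (∀ᵐ y ∂(κ x), |β y - β x| ≤ T₁)
      · left
        by_contra hns
        rw [Set.mem_union] at hns
        push_neg at hns
        exact margulis_core (κ x) T₀ T₁ (α x) (β x) hT₀ hT₀T₁ α β hαmeas hβmeas
          hg.1 hg.2 hns.1 hns.2 hx.1 hx.2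
      · right
        exact hg
    calc μ {x | T₁ ≤ max 0 (max (α x - 2 * T₁) (β x - 5 * T₁)) ∧
          max 0 (max (α x - 2 * T₁) (β x - 5 * T₁)) <
            (2 * T₀ - T₁) + ∫ y, max 0 (max (α y - 2 * T₁) (β y - 5 * T₁)) ∂(κ x)}
        ≤ μ ((Sα ∪ Sβ) ∪ N) := measure_mono hsub
      _ ≤ μ (Sα ∪ Sβ) + μ N := measure_union_le _ _
      _ = μ (Sα ∪ Sβ) := by rw [hNnull, add_zero]
      _ ≤ μ Sα + μ Sβ := measure_union_le _ _
      _ < ENNReal.ofReal ε + ENNReal.ofReal ε := ENNReal.add_lt_add hαMb hβMb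
      _ = ENNReal.ofReal (2 * ε) := by
          rw [← ENNReal.ofReal_add hε.le hε.le]
          ring_nf
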